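/- Let r ∈ H and suppose h = ∑_{j=v+1}^∞ c_j g_j where g_j are unit-norm dictionary elements with coherence at most M, the tail coefficients satisfy ∑_{j>v}|c_j| ≤ B and |c_{v+1}| ≤ 2B/s with |c_{v+1}| ≥ |c_{v+2}| ≥ ..., and suppose q_s ≥ ‖P_{G(J_l)} r‖ for every block J_l = [(l-1)s+v+1, ls+v] of s consecutive indices. Then ⟨r, h⟩ ≤ 3 q_s (1+M(s-1))^{1/2} B s^{-1/2}. -/

import Mathlib

open scoped RealInnerProductSpace BigOperators

noncomputable instance spanRangeFin.finiteDimensional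
    {H : Type*} [NormedAddCommGroup H] [InnerProductSpace ℝ H]
    {s : ℕ} (g : Fin s → H) :
    FiniteDimensional ℝ (Submodule.span ℝ (Set.range g)) :=
  FiniteDimensional.span_of_finite ℝ (Set.finite_range g)

set_option maxHeartbeats 1000000
set_option synthInstance.maxHeartbeats 1000000

lemma proj_sq_bound {H : Type*} [NormedAddCommGroup H] [InnerProductSpace ℝ H] [CompleteSpace H]
    {s : ℕ} (hs : 1 ≤ s) (M : ℝ) (hM : 0 ≤ M) (G : Fin s → H)
    (hGn : ∀ i, ‖G i‖ = 1) (hGc : ∀ i j, i ≠ j → |⟪G i, G j⟫| ≤ M) (r : H) :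
    ∑ i, ⟪r, G i⟫ ^ 2 ≤ (1 + M * ((s : ℝ) - 1)) *
      ‖(Submodule.orthogonalProjection (Submodule.span ℝ (Set.range G)) r : H)‖ ^ 2 := by
  have hC : (1 : ℝ) ≤ 1 + M * ((s : ℝ) - 1) := by
    have : (1:ℝ) ≤ (s:ℝ) := by exact_mod_cast hs
    nlinarith
  set K := Submodule.span ℝ (Set.range G) with hK
  set p : H := (Submodule.orthogonalProjection K r : H) with hp
  set b : Fin s → ℝ := fun i => ⟪r, G i⟫ with hb
  set u : H := ∑ i, b i • G i with hu
  set S : ℝ := ∑ i, b i ^ 2 with hSdef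
  have hS0 : 0 ≤ S := Finset.sum_nonneg fun i _ => sq_nonneg _
  have humem : u ∈ K := Submodule.sum_mem _ fun i _ =>
    Submodule.smul_mem _ _ (Submodule.subset_span ⟨i, rfl⟩)
  have h1 : ⟪r, u⟫ = S := by
    simp [hu, inner_sum, real_inner_smul_right, hSdef, sq, mul_comm]; rfl
  have h2 : ⟪r - p, u⟫ = 0 := by have := Submodule.starProjection_inner_eq_zero (K := K) r u humem; exact this
  have h3 : ⟪p, u⟫ = S := by
    rw [inner_sub_left] at h2; linarith
  have hnu : ‖u‖ ^ 2 ≤ (1 + M * ((s : ℝ) - 1)) * S := by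
    have hexp : ‖u‖ ^ 2 = ∑ i, ∑ j, (b i * b j) * ⟪G i, G j⟫ := by
      rw [← real_inner_self_eq_norm_sq]
      simp only [hu, inner_sum, sum_inner, real_inner_smul_right, real_inner_smul_left,
        Finset.mul_sum, mul_assoc]
      exact Finset.sum_congr rfl fun i _ => Finset.sum_congr rfl fun j _ => by
        rw [real_inner_comm]
    rw [hexp]
    have hterm : ∀ i j : Fin s, (b i * b j) * ⟪G i, G j⟫ ≤
        M * (|b i| * |b j|) + (if i = j then (1 - M) * b i ^ 2 else 0) := by
      intro i j
      by_cases hij : i = j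
      · subst hij
        rw [if_pos rfl]
        have : ⟪G i, G i⟫ = 1 := by
          rw [real_inner_self_eq_norm_sq, hGn i]; norm_num
        rw [this]
        have : |b i| * |b i| = b i ^ 2 := by rw [← abs_mul, sq, abs_mul_self]
        nlinarith
      · simp only [if_neg hij, add_zero]
        calc (b i * b j) * ⟪G i, G j⟫ ≤ |(b i * b j) * ⟪G i, G j⟫| := le_abs_self _
          _ = |b i| * |b j| * |⟪G i, G j⟫| := by rw [abs_mul, abs_mul]
          _ ≤ |b i| * |b j| * M := by
              apply mul_le_mul_of_nonneg_left (hGc i j hij) (by positivity)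
          _ = M * (|b i| * |b j|) := by ring
    calc ∑ i, ∑ j, (b i * b j) * ⟪G i, G j⟫
        ≤ ∑ i, ∑ j, (M * (|b i| * |b j|) + if i = j then (1 - M) * b i ^ 2 else 0) :=
          Finset.sum_le_sum fun i _ => Finset.sum_le_sum fun j _ => hterm i j
      _ = ∑ i, (M * (|b i| * ∑ j, |b j|) + (1 - M) * b i ^ 2) := by
          refine Finset.sum_congr rfl fun i _ => ?_
          rw [Finset.sum_add_distrib]
          congr 1
          · rw [← Finset.mul_sum, ← Finset.mul_sum]
          · simp
      _ = M * (∑ i, |b i|) ^ 2 + (1 - M) * S := by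
          rw [Finset.sum_add_distrib, ← Finset.mul_sum, ← Finset.mul_sum]
          congr 1
          rw [← Finset.sum_mul, sq]
      _ ≤ M * ((s : ℝ) * S) + (1 - M) * S := by
          have hcs2 := sq_sum_le_card_mul_sum_sq (s := (Finset.univ : Finset (Fin s)))
            (f := fun i : Fin s => |b i|)
          simp only [Finset.card_univ, Fintype.card_fin, sq_abs] at hcs2
          have : (∑ i, |b i|) ^ 2 ≤ (s : ℝ) * S := by exact_mod_cast hcs2
          nlinarith
      _ = (1 + M * ((s : ℝ) - 1)) * S := by ring
  have hcs : S ≤ ‖p‖ * ‖u‖ := h3 ▸ real_inner_le_norm p u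
  rcases hS0.eq_or_lt with hSz | hSpos
  · rw [← hSz]; positivity
  · have hsq : S ^ 2 ≤ ‖p‖ ^ 2 * ‖u‖ ^ 2 := by nlinarith [norm_nonneg p, norm_nonneg u]
    nlinarith [norm_nonneg p, sq_nonneg (‖p‖ * ‖u‖)]

/-- bound on `⟪r, h⟫` for `h = ∑_{j>v} c_j g_j`.  If the tail
coefficients are nonincreasing with ℓ¹-norm at most `B` and `|c_{v+1}| ≤ 2B/s`, the
atoms are unit-norm with mutual coherence at most `M`, and `q_s` dominates the norm of
the projection of `r` onto the span of each block `J_l` of `s` consecutive atoms, then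
`⟪r, h⟫ ≤ 3 q_s (1 + M(s−1))^{1/2} B s^{-1/2}`. -/
theorem block_inner_product_bound
    {H : Type*} [NormedAddCommGroup H] [InnerProductSpace ℝ H] [CompleteSpace H]
    (M : ℝ) (hM : 0 ≤ M) (s v : ℕ) (hs : 1 ≤ s)
    (g : ℕ → H) (hgnorm : ∀ j, ‖g j‖ = 1)
    (hcoh : ∀ i j, i ≠ j → |⟪g i, g j⟫| ≤ M)
    (B : ℝ) (hB : 0 < B) (c : ℕ → ℝ)
    (hmono : ∀ j, v + 1 ≤ j → |c (j + 1)| ≤ |c j|)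
    (hsummable : Summable fun j : ℕ => |c (v + 1 + j)|)
    (hl1 : (∑' j : ℕ, |c (v + 1 + j)|) ≤ B)
    (hfirst : |c (v + 1)| ≤ 2 * B / s)
    (h : H) (hrep : HasSum (fun j : ℕ => c (v + 1 + j) • g (v + 1 + j)) h)
    (r : H) (qs : ℝ)
    (hqs : ∀ l : ℕ,
      ‖(Submodule.orthogonalProjection
          (Submodule.span ℝ (Set.range fun i : Fin s => g (l * s + v + 1 + i))) r : H)‖
        ≤ qs) :
    ⟪r, h⟫ ≤ 3 * qs * Real.sqrt (1 + M * (s - 1)) * B / Real.sqrt s := by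
  haveI : NeZero s := ⟨by omega⟩
  have hs1 : (1:ℝ) ≤ (s:ℝ) := by exact_mod_cast hs
  have hspos : (0:ℝ) < (s:ℝ) := by linarith
  have hsqrts : 0 < Real.sqrt s := Real.sqrt_pos.mpr hspos
  have hC0 : (0:ℝ) ≤ 1 + M * ((s:ℝ) - 1) := by nlinarith
  have hqs0 : 0 ≤ qs := le_trans (norm_nonneg _) (hqs 0)
  set K : ℝ := qs * Real.sqrt (1 + M * ((s:ℝ) - 1)) with hKdef
  have hK0 : 0 ≤ K := mul_nonneg hqs0 (Real.sqrt_nonneg _)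
  -- helper identity
  have hid : ∀ x : ℝ, Real.sqrt s * (x / s) = x / Real.sqrt s := by
    intro x
    have hss : Real.sqrt s * Real.sqrt s = (s:ℝ) := Real.mul_self_sqrt hspos.le
    rw [eq_div_iff hsqrts.ne']
    field_simp
    linear_combination x * hss
  -- the absolute coefficients
  set d : ℕ → ℝ := fun j => |c (v + 1 + j)| with hd
  have hd0 : ∀ j, 0 ≤ d j := fun j => abs_nonneg _
  have hdstep : ∀ j, d (j+1) ≤ d j := by
    intro j
    have h' := hmono (v+1+j) (by omega)
    have he : v+1+(j+1) = (v+1+j)+1 := by omega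
    rw [hd]; dsimp only; rw [he]; exact h'
  have hdanti : Antitone d := antitone_nat_of_succ_le hdstep
  -- inner-product sum
  have hinner : HasSum (fun j : ℕ => c (v+1+j) * ⟪r, g (v+1+j)⟫) ⟪r, h⟫ := by
    have := hrep.mapL (innerSL ℝ r)
    simpa [real_inner_smul_right] using this
  set a : ℕ → ℝ := fun j => c (v+1+j) * ⟪r, g (v+1+j)⟫ with ha
  set T : ℕ → ℝ := fun l => ∑ i : Fin s, a (l * s + ↑i) with hT
  have hTsum : HasSum T ⟪r, h⟫ :=
    HasSum.prod_fiberwise ((Equiv.hasSum_iff (Nat.divModEquiv s).symm).mpr hinner)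
      (fun l => hasSum_fintype _)
  set E : ℕ → ℝ := fun l => ∑ i : Fin s, d (l * s + ↑i) with hE
  have hEsum : HasSum E (∑' j, d j) :=
    HasSum.prod_fiberwise ((Equiv.hasSum_iff (Nat.divModEquiv s).symm).mpr hsummable.hasSum)
      (fun l => hasSum_fintype _)
  set D : ℕ → ℝ := fun l => Real.sqrt (∑ i : Fin s, d (l*s+↑i)^2) with hD
  have hD0 : ∀ l, 0 ≤ D l := fun l => Real.sqrt_nonneg _
  -- blockwise Cauchy–Schwarz bound
  have hTD : ∀ l, T l ≤ K * D l := by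
    intro l
    have hne : ∀ i j : Fin s, i ≠ j → (l*s+v+1+↑i : ℕ) ≠ l*s+v+1+↑j := by
      intro i j hij hEq
      exact hij (Fin.ext (by omega))
    have hproj := proj_sq_bound hs M hM (fun i : Fin s => g (l * s + v + 1 + ↑i))
      (fun i => hgnorm _) (fun i j hij => hcoh _ _ (hne i j hij)) r
    have hb2 : ∑ i : Fin s, ⟪r, g (l*s+v+1+↑i)⟫ ^ 2 ≤ (1 + M * ((s:ℝ) - 1)) * qs ^ 2 := by
      refine hproj.trans ?_
      have hq2 : ‖(Submodule.orthogonalProjection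
          (Submodule.span ℝ (Set.range fun i : Fin s => g (l * s + v + 1 + ↑i))) r : H)‖ ^ 2
          ≤ qs ^ 2 := pow_le_pow_left₀ (norm_nonneg _) (hqs l) 2
      exact mul_le_mul_of_nonneg_left hq2 hC0
    have hcs := Real.sum_mul_le_sqrt_mul_sqrt (Finset.univ)
      (fun i : Fin s => c (v+1+(l*s+↑i))) (fun i : Fin s => ⟪r, g (l*s+v+1+↑i)⟫)
    have hTl : T l = ∑ i : Fin s, c (v+1+(l*s+↑i)) * ⟪r, g (l*s+v+1+↑i)⟫ := by
      refine Finset.sum_congr rfl fun i _ => ?_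
      have he : v + 1 + (l*s+↑i) = l*s+v+1+↑i := by omega
      rw [ha]; dsimp only; rw [he]
    have hfs : Real.sqrt (∑ i : Fin s, (c (v+1+(l*s+↑i)))^2) = D l := by
      rw [hD]; dsimp only
      congr 1
      exact Finset.sum_congr rfl fun i _ => (sq_abs _).symm
    have hss2 : Real.sqrt (∑ i : Fin s, ⟪r, g (l*s+v+1+↑i)⟫^2)
        ≤ Real.sqrt (1 + M * ((s:ℝ) - 1)) * qs := by
      refine le_trans (Real.sqrt_le_sqrt hb2) ?_
      rw [Real.sqrt_mul hC0, Real.sqrt_sq hqs0]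
    calc T l = ∑ i : Fin s, c (v+1+(l*s+↑i)) * ⟪r, g (l*s+v+1+↑i)⟫ := hTl
      _ ≤ Real.sqrt (∑ i : Fin s, (c (v+1+(l*s+↑i)))^2) *
            Real.sqrt (∑ i : Fin s, ⟪r, g (l*s+v+1+↑i)⟫^2) := hcs
      _ = D l * Real.sqrt (∑ i : Fin s, ⟪r, g (l*s+v+1+↑i)⟫^2) := by rw [hfs]
      _ ≤ D l * (Real.sqrt (1 + M * ((s:ℝ) - 1)) * qs) :=
          mul_le_mul_of_nonneg_left hss2 (hD0 l)
      _ = K * D l := by rw [hKdef]; ring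
  -- bound on D 0
  have hD0bound : D 0 ≤ 2 * B / Real.sqrt s := by
    have h1 : D 0 ≤ Real.sqrt ((s:ℝ) * d 0 ^ 2) := by
      apply Real.sqrt_le_sqrt
      calc ∑ i : Fin s, d (0*s+↑i)^2 ≤ ∑ _i : Fin s, d 0 ^2 := by
            refine Finset.sum_le_sum fun i _ => ?_
            exact pow_le_pow_left₀ (hd0 _) (hdanti (Nat.zero_le _)) 2
        _ = (s:ℝ) * d 0 ^ 2 := by simp [Finset.sum_const, nsmul_eq_mul]
    have h2 : Real.sqrt ((s:ℝ) * d 0 ^ 2) = Real.sqrt s * d 0 := by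
      rw [Real.sqrt_mul hspos.le, Real.sqrt_sq (hd0 0)]
    have h3 : d 0 ≤ 2 * B / s := by
      have : d 0 = |c (v+1)| := rfl
      rw [this]; exact hfirst
    calc D 0 ≤ Real.sqrt s * d 0 := by rw [← h2]; exact h1
      _ ≤ Real.sqrt s * (2 * B / s) :=
          mul_le_mul_of_nonneg_left h3 (Real.sqrt_nonneg _)
      _ = 2 * B / Real.sqrt s := hid _
  -- bound on D (l+1)
  have hDsucc : ∀ l, D (l+1) ≤ E l / Real.sqrt s := by
    intro l
    have h1 : D (l+1) ≤ Real.sqrt ((s:ℝ) * d ((l+1)*s) ^ 2) := by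
      apply Real.sqrt_le_sqrt
      calc ∑ i : Fin s, d ((l+1)*s+↑i)^2 ≤ ∑ _i : Fin s, d ((l+1)*s) ^2 := by
            refine Finset.sum_le_sum fun i _ => ?_
            exact pow_le_pow_left₀ (hd0 _) (hdanti (Nat.le_add_right _ _)) 2
        _ = (s:ℝ) * d ((l+1)*s) ^ 2 := by simp [Finset.sum_const, nsmul_eq_mul]
    have h2 : Real.sqrt ((s:ℝ) * d ((l+1)*s) ^ 2) = Real.sqrt s * d ((l+1)*s) := by
      rw [Real.sqrt_mul hspos.le, Real.sqrt_sq (hd0 _)]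
    have h3 : (s:ℝ) * d ((l+1)*s) ≤ E l := by
      rw [hE]; dsimp only
      calc (s:ℝ) * d ((l+1)*s) = ∑ _i : Fin s, d ((l+1)*s) := by
            simp [Finset.sum_const, nsmul_eq_mul]
        _ ≤ ∑ i : Fin s, d (l*s+↑i) := by
            refine Finset.sum_le_sum fun i _ => ?_
            apply hdanti
            have := i.is_lt
            calc l*s+↑i ≤ l*s + s := by omega
              _ = (l+1)*s := by ring
    have h4 : d ((l+1)*s) ≤ E l / s := by
      rw [le_div_iff₀ hspos]; linarith
    calc D (l+1) ≤ Real.sqrt s * d ((l+1)*s) := by rw [← h2]; exact h1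
      _ ≤ Real.sqrt s * (E l / s) :=
          mul_le_mul_of_nonneg_left h4 (Real.sqrt_nonneg _)
      _ = E l / Real.sqrt s := hid _
  -- summability
  have hEdiv : Summable (fun l => E l / Real.sqrt s) := hEsum.summable.div_const _
  have hDshift : Summable (fun l => D (l+1)) :=
    Summable.of_nonneg_of_le (fun l => hD0 _) hDsucc hEdiv
  have hDsummable : Summable D := (summable_nat_add_iff 1).mp hDshift
  -- total bound
  have hDtotal : ∑' l, D l ≤ 3 * B / Real.sqrt s := by
    rw [Summable.tsum_eq_zero_add hDsummable]
    have h5 : ∑' l, D (l+1) ≤ ∑' l, E l / Real.sqrt s :=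
      Summable.tsum_le_tsum hDsucc hDshift hEdiv
    have h6 : ∑' l, E l / Real.sqrt s = (∑' j, d j) / Real.sqrt s := by
      rw [tsum_div_const, hEsum.tsum_eq]
    have h7 : (∑' j, d j) / Real.sqrt s ≤ B / Real.sqrt s :=
      (div_le_div_iff_of_pos_right hsqrts).mpr hl1
    have : (2 * B / Real.sqrt s) + B / Real.sqrt s = 3 * B / Real.sqrt s := by
      field_simp; ring
    linarith
  -- conclusion
  rw [← hTsum.tsum_eq]
  calc ∑' l, T l ≤ ∑' l, K * D l :=
        Summable.tsum_le_tsum hTD hTsum.summable (hDsummable.mul_left K)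
    _ = K * ∑' l, D l := tsum_mul_left
    _ ≤ K * (3 * B / Real.sqrt s) := mul_le_mul_of_nonneg_left hDtotal hK0
    _ = 3 * qs * Real.sqrt (1 + M * ((s:ℝ) - 1)) * B / Real.sqrt s := by
        rw [hKdef]; ring
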